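/- With Z̄_n = ∑_{k=0}^{n∧N} (Y_k − Y_{k−1})/q_k, for all −1 ≤ m ≤ n one has E[Z̄_n] = E[Y_n] and E[(Z̄_n − Z̄_m)²] = ∑_{i=m+1}^{n} (E[(Y_{i−1} − Y_n)²] − E[(Y_i − Y_n)²]) / q_i. -/

import Mathlib

open MeasureTheory ProbabilityTheory Filter

/-- The increments `Δ_k = Y_k - Y_{k-1}` with the convention `Y_{-1} = 0`. -/
noncomputable def diffSeq {Ω : Type*} (Y : ℕ → Ω → ℝ) : ℕ → Ω → ℝ :=
  fun k ω => Y k ω - if k = 0 then 0 else Y (k - 1) ω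

/-- `Y` indexed by integers, with `Y_j = 0` for `j < 0`. -/
noncomputable def YInt {Ω : Type*} (Y : ℕ → Ω → ℝ) : ℤ → Ω → ℝ :=
  fun j ω => if j < 0 then 0 else Y j.toNat ω

/-- `Z̄_n = ∑_{k=0}^{n ∧ N} (Y_k - Y_{k-1}) / q_k`, with `Z̄_{-1} = 0`. -/
noncomputable def coupledSumTrunc {Ω : Type*} (Y : ℕ → Ω → ℝ) (q : ℕ → ℝ)
    (N : Ω → ℕ) : ℤ → Ω → ℝ :=
  fun j ω => if j < 0 then 0
    else ∑ k ∈ Finset.range (min j.toNat (N ω) + 1), diffSeq Y k ω / q k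

theorem stmt_8 {Ω : Type*} [MeasurableSpace Ω] (μ : Measure Ω)
    [IsProbabilityMeasure μ]
    (Y : ℕ → Ω → ℝ) (hYmeas : ∀ n, Measurable (Y n))
    (hY : ∀ n, MemLp (Y n) 2 μ)
    (q : ℕ → ℝ) (hq0 : q 0 = 1) (hqdec : ∀ i, q (i + 1) ≤ q i)
    (hqpos : ∀ i, 0 < q i) (hqlim : Tendsto q atTop (nhds 0))
    (N : Ω → ℕ) (hNmeas : Measurable N)
    (hindep : IndepFun (fun ω i => Y i ω) N μ)
    (hN : ∀ i, μ {ω | i ≤ N ω} = ENNReal.ofReal (q i))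
    (m n : ℤ) (hm : -1 ≤ m) (hmn : m ≤ n) :
    (∫ ω, coupledSumTrunc Y q N n ω ∂μ = ∫ ω, YInt Y n ω ∂μ) ∧
      ∫ ω, (coupledSumTrunc Y q N n ω - coupledSumTrunc Y q N m ω) ^ 2 ∂μ =
        ∑ i ∈ Finset.Icc (m + 1) n,
          ((∫ ω, (YInt Y (i - 1) ω - YInt Y n ω) ^ 2 ∂μ) -
              ∫ ω, (YInt Y i ω - YInt Y n ω) ^ 2 ∂μ) / q i.toNat := by
  classical
  have hqne : ∀ i, q i ≠ 0 := fun i => (hqpos i).ne'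
  -- basic properties of the increments
  have hDLp : ∀ k, MemLp (diffSeq Y k) 2 μ := by
    intro k
    cases k with
    | zero =>
        have h : diffSeq Y 0 = Y 0 := by ext ω; simp [diffSeq]
        rw [h]; exact hY 0
    | succ k =>
        have h : diffSeq Y (k+1) = Y (k+1) - Y k := (by ext ω; simp [diffSeq])
        rw [h]; exact (hY (k+1)).sub (hY k)
  have hDint : ∀ k, Integrable (diffSeq Y k) μ := fun k => (hDLp k).integrable one_le_two
  have hmul : ∀ {f g : Ω → ℝ}, MemLp f 2 μ → MemLp g 2 μ →
      Integrable (fun ω => f ω * g ω) μ := by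
    intro f g hf hg
    have := hg.smul (p := 2) (q := 2) (r := 1) hf
    exact memLp_one_iff_integrable.mp this
  have hDDint : ∀ j k, Integrable (fun ω => diffSeq Y j ω * diffSeq Y k ω) μ :=
    fun j k => hmul (hDLp j) (hDLp k)
  -- telescoping
  have hsum : ∀ (nn : ℕ) ω, ∑ k ∈ Finset.range (nn+1), diffSeq Y k ω = Y nn ω := by
    intro nn ω
    induction nn with
    | zero => simp [diffSeq]
    | succ p ih => rw [Finset.sum_range_succ, ih]; simp [diffSeq]
  -- the indicator functions
  set I : ℕ → Ω → ℝ := fun k ω => if k ≤ N ω then 1 else 0 with hIdef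
  have hImeas : ∀ k, Measurable (I k) := by
    intro k
    have hs : MeasurableSet {ω | k ≤ N ω} := hNmeas measurableSet_Ici
    exact Measurable.ite hs measurable_const measurable_const
  have hIind : ∀ k, I k = Set.indicator {ω | k ≤ N ω} (1 : Ω → ℝ) := by
    intro k; ext ω; simp [hIdef, Set.indicator_apply]
  have hIint : ∀ k, Integrable (I k) μ := by
    intro k
    rw [hIind k]
    exact (integrable_const (1:ℝ)).indicator (hNmeas measurableSet_Ici)
  have hIval : ∀ k, ∫ ω, I k ω ∂μ = q k := by
    intro k
    have hs : MeasurableSet {ω | k ≤ N ω} := hNmeas measurableSet_Ici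
    rw [hIind k, integral_indicator_one hs, measureReal_def, hN k,
      ENNReal.toReal_ofReal (hqpos k).le]
  have hImul : ∀ j k ω, I j ω * I k ω = I (max j k) ω := by
    intro j k ω
    by_cases h1 : j ≤ N ω <;> by_cases h2 : k ≤ N ω <;>
      simp [hIdef, h1, h2, max_le_iff] <;> omega
  have hIbdd : ∀ {g : Ω → ℝ} (_ : Integrable g μ) (k : ℕ),
      Integrable (fun ω => g ω * I k ω) μ := by
    intro g hg k
    have := hg.bdd_mul (hImeas k).aestronglyMeasurable
      (c := 1) (Filter.Eventually.of_forall fun ω => by by_cases h : k ≤ N ω <;> simp [hIdef, h])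
    exact this.congr (Filter.Eventually.of_forall fun ω => mul_comm _ _)
  -- the key independence computation
  have hkey : ∀ (f : (ℕ → ℝ) → ℝ), Measurable f →
      Integrable (fun ω => f (fun i => Y i ω)) μ → ∀ k,
      ∫ ω, f (fun i => Y i ω) * I k ω ∂μ = (∫ ω, f (fun i => Y i ω) ∂μ) * q k := by
    intro f hf hint k
    have hI : IndepFun (fun ω => f (fun i => Y i ω)) (I k) μ :=
      hindep.comp hf (measurable_from_top (f := fun a : ℕ => if k ≤ a then (1:ℝ) else 0))
    have := hI.integral_mul_eq_mul_integral hint.aestronglyMeasurable (hIint k).aestronglyMeasurable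
    rw [← hIval k]
    simpa [Pi.mul_apply] using this
  have hDf : ∀ j, Measurable (fun y : ℕ → ℝ => y j - if j = 0 then 0 else y (j-1)) := by
    intro j
    refine (measurable_pi_apply j).sub ?_
    split_ifs <;> first | exact measurable_const | exact measurable_pi_apply _
  have hDind : ∀ j k, ∫ ω, diffSeq Y j ω * I k ω ∂μ = (∫ ω, diffSeq Y j ω ∂μ) * q k := by
    intro j k
    exact hkey (fun y => y j - if j = 0 then 0 else y (j-1)) (hDf j) (hDint j) k
  have hDDind : ∀ j k l, ∫ ω, (diffSeq Y j ω * diffSeq Y k ω) * I l ω ∂μ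
      = (∫ ω, diffSeq Y j ω * diffSeq Y k ω ∂μ) * q l := by
    intro j k l
    exact hkey (fun y => (y j - if j = 0 then 0 else y (j-1)) *
      (y k - if k = 0 then 0 else y (k-1))) ((hDf j).mul (hDf k)) (hDDint j k) l
  -- reduction of the truncated sum
  have htrunc : ∀ (nn : ℕ) ω, coupledSumTrunc Y q N (nn:ℤ) ω
      = ∑ k ∈ Finset.range (nn+1), diffSeq Y k ω / q k * I k ω := by
    intro nn ω
    have h0 : ¬ ((nn:ℤ) < 0) := by omega
    simp only [coupledSumTrunc, h0, if_false, Int.toNat_natCast]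
    rw [← Finset.sum_subset (Finset.range_subset_range.2 (by omega : min nn (N ω) + 1 ≤ nn + 1))]
    · apply Finset.sum_congr rfl
      intro k hk
      have : k ≤ N ω := by simp at hk; omega
      simp [hIdef, this]
    · intro k hk1 hk2
      have h1 : k ≤ nn := by simpa using Nat.lt_succ_iff.mp (Finset.mem_range.mp hk1)
      have h2 : ¬ k ≤ N ω := by simp at hk2; omega
      simp [hIdef, h2]
  rcases lt_or_ge n 0 with hn | hn
  · have hn' : n = -1 := by omega
    have hm' : m = -1 := by omega
    subst hn'; subst hm'
    constructor
    · simp [coupledSumTrunc, YInt]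
    · norm_num [coupledSumTrunc]
  obtain ⟨nn, rfl⟩ : ∃ nn : ℕ, n = nn := ⟨n.toNat, (Int.toNat_of_nonneg hn).symm⟩
  constructor
  · -- first moment
    have hterm : ∀ k, Integrable (fun ω => diffSeq Y k ω / q k * I k ω) μ :=
      fun k => hIbdd ((hDint k).div_const _) k
    calc ∫ ω, coupledSumTrunc Y q N (nn:ℤ) ω ∂μ
        = ∫ ω, ∑ k ∈ Finset.range (nn+1), diffSeq Y k ω / q k * I k ω ∂μ := by
          simp_rw [htrunc]
      _ = ∑ k ∈ Finset.range (nn+1), ∫ ω, diffSeq Y k ω / q k * I k ω ∂μ :=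
          integral_finset_sum _ (fun k _ => hterm k)
      _ = ∑ k ∈ Finset.range (nn+1), ∫ ω, diffSeq Y k ω ∂μ := by
          apply Finset.sum_congr rfl
          intro k _
          have h1 : ∀ ω, diffSeq Y k ω / q k * I k ω = (diffSeq Y k ω * I k ω) / q k := by
            intro ω; ring
          simp_rw [h1]
          rw [integral_div, hDind k k, mul_div_assoc, div_self (hqne k), mul_one]
      _ = ∫ ω, ∑ k ∈ Finset.range (nn+1), diffSeq Y k ω ∂μ :=
          (integral_finset_sum _ (fun k _ => hDint k)).symm
      _ = ∫ ω, YInt Y (nn:ℤ) ω ∂μ := by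
          apply integral_congr_ae
          apply Filter.Eventually.of_forall
          intro ω
          dsimp only
          rw [hsum nn ω]
          simp only [YInt]
          exact (if_neg (by omega)).symm
  · -- second moment
    set M := (m+1).toNat with hM
    set T := nn + 1 with hT
    set c : ℕ → ℕ → ℝ := fun j k => ∫ ω, diffSeq Y j ω * diffSeq Y k ω ∂μ with hc
    have hcsymm : ∀ j k, c j k = c k j := by
      intro j k
      simp only [hc]
      congr 1
      ext ω
      ring
    -- pointwise difference
    have hdiff : ∀ ω, coupledSumTrunc Y q N nn ω - coupledSumTrunc Y q N m ω
        = ∑ k ∈ Finset.Ico M T, diffSeq Y k ω / q k * I k ω := by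
      intro ω
      rcases eq_or_lt_of_le hm with hm1 | hm0
      · have h0 : coupledSumTrunc Y q N m ω = 0 := by
          rw [coupledSumTrunc]
          exact if_pos (by omega)
        have hM0 : M = 0 := by omega
        rw [h0, sub_zero, htrunc, hM0, Finset.range_eq_Ico]
      · obtain ⟨mm, rfl⟩ : ∃ mm : ℕ, m = mm := ⟨m.toNat, by omega⟩
        have hM1 : M = mm + 1 := by omega
        rw [htrunc, htrunc, Finset.sum_Ico_eq_sub _ (by omega : M ≤ T), hM1]
    -- the integral of the square as a double sum
    have hsqint : ∫ ω, (coupledSumTrunc Y q N nn ω - coupledSumTrunc Y q N m ω)^2 ∂μ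
        = ∑ j ∈ Finset.Ico M T, ∑ k ∈ Finset.Ico M T, c j k * q (max j k) / (q j * q k) := by
      have hpt : ∀ ω, (coupledSumTrunc Y q N nn ω - coupledSumTrunc Y q N m ω)^2
          = ∑ j ∈ Finset.Ico M T, ∑ k ∈ Finset.Ico M T,
              (diffSeq Y j ω * diffSeq Y k ω) * I (max j k) ω / (q j * q k) := by
        intro ω
        rw [hdiff ω, sq, Finset.sum_mul_sum]
        apply Finset.sum_congr rfl; intro j _
        apply Finset.sum_congr rfl; intro k _
        rw [← hImul j k ω]
        ring
      simp_rw [hpt]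
      rw [integral_finset_sum _ (fun j _ => integrable_finset_sum _
        (fun k _ => ((hIbdd (hDDint j k) (max j k)).div_const _)))]
      apply Finset.sum_congr rfl; intro j _
      rw [integral_finset_sum _ (fun k _ => ((hIbdd (hDDint j k) (max j k)).div_const _))]
      apply Finset.sum_congr rfl; intro k _
      rw [integral_div, hDDind j k (max j k)]
    -- symmetric double-sum computation
    have hsym : ∑ j ∈ Finset.Ico M T, ∑ k ∈ Finset.Ico M T, c j k * q (max j k) / (q j * q k)
        = ∑ j ∈ Finset.Ico M T, (c j j + 2 * ∑ k ∈ Finset.Ico (j+1) T, c j k) / q j := by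
      set G : ℕ → ℕ → ℝ := fun j k => c j k * q (max j k) / (q j * q k) with hG
      have hGsymm : ∀ j k, G j k = G k j := by
        intro j k
        simp only [hG, hcsymm j k, max_comm j k]
        ring
      have hsplit : ∀ j ∈ Finset.Ico M T,
          ∑ k ∈ Finset.Ico M T, G j k
            = ((∑ k ∈ Finset.Ico M j, G j k + G j j) + ∑ k ∈ Finset.Ico (j+1) T, G j k) := by
        intro j hj
        simp only [Finset.mem_Ico] at hj
        rw [← Finset.sum_Ico_consecutive _ (by omega : M ≤ j+1) (by omega : j+1 ≤ T),
          Finset.sum_Ico_succ_top (by omega : M ≤ j)]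
      have hswap : ∑ j ∈ Finset.Ico M T, ∑ k ∈ Finset.Ico M j, G j k
          = ∑ j ∈ Finset.Ico M T, ∑ k ∈ Finset.Ico (j+1) T, G j k := by
        have h1 : ∑ j ∈ Finset.Ico M T, ∑ k ∈ Finset.Ico M j, G j k
            = ∑ j ∈ Finset.Ico M T, ∑ k ∈ Finset.Ico M j, G k j :=
          Finset.sum_congr rfl fun j _ => Finset.sum_congr rfl fun k _ => hGsymm j k
        rw [h1, ← Finset.sum_Ico_Ico_comm' M T G]
      have hRHS : ∀ j ∈ Finset.Ico M T,
          (c j j + 2 * ∑ k ∈ Finset.Ico (j+1) T, c j k) / q j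
            = G j j + 2 * ∑ k ∈ Finset.Ico (j+1) T, G j k := by
        intro j hj
        have hGjj : G j j = c j j / q j := by
          simp only [hG, max_self]
          rw [div_eq_div_iff (mul_ne_zero (hqne j) (hqne j)) (hqne j)]
          ring
        have hGjk : ∀ k ∈ Finset.Ico (j+1) T, G j k = c j k / q j := by
          intro k hk
          simp only [Finset.mem_Ico] at hk
          have hmax : max j k = k := by omega
          simp only [hG, hmax]
          rw [div_eq_div_iff (mul_ne_zero (hqne j) (hqne k)) (hqne j)]
          ring
        rw [Finset.sum_congr rfl hGjk, hGjj, ← Finset.sum_div]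
        ring
      rw [Finset.sum_congr rfl hsplit, Finset.sum_congr rfl hRHS,
        Finset.sum_add_distrib, Finset.sum_add_distrib, hswap, Finset.sum_add_distrib,
        ← Finset.mul_sum]
      ring
    -- evaluation of the telescoping numerators
    have hAB : ∀ i ∈ Finset.Ico M T,
        (∫ ω, (YInt Y ((i:ℤ) - 1) ω - YInt Y (nn:ℤ) ω)^2 ∂μ)
          - ∫ ω, (YInt Y (i:ℤ) ω - YInt Y (nn:ℤ) ω)^2 ∂μ
        = c i i + 2 * ∑ k ∈ Finset.Ico (i+1) T, c i k := by
      intro i hi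
      simp only [Finset.mem_Ico] at hi
      have hYi : ∀ ω, YInt Y (i:ℤ) ω = Y i ω := by
        intro ω; simp [YInt]
      have hYn : ∀ ω, YInt Y (nn:ℤ) ω = Y nn ω := by
        intro ω; simp [YInt]
      have hYip : ∀ ω, YInt Y ((i:ℤ)-1) ω = Y i ω - diffSeq Y i ω := by
        intro ω
        rcases Nat.eq_zero_or_pos i with h0 | h0
        · subst h0; simp [YInt, diffSeq]
        · have h1 : ¬((i:ℤ)-1 < 0) := by omega
          have h2 : ((i:ℤ)-1).toNat = i - 1 := by omega
          have h3 : i ≠ 0 := by omega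
          simp only [YInt, h1, if_false, h2, diffSeq, h3]
          ring
      have hB : MemLp (fun ω => Y i ω - Y nn ω) 2 μ := (hY i).sub (hY nn)
      have hBD : MemLp (fun ω => (Y i ω - Y nn ω) - diffSeq Y i ω) 2 μ := hB.sub (hDLp i)
      have e1 : ∫ ω, (YInt Y ((i:ℤ)-1) ω - YInt Y (nn:ℤ) ω)^2 ∂μ
          = ∫ ω, ((Y i ω - Y nn ω) - diffSeq Y i ω)^2 ∂μ := by
        apply integral_congr_ae
        apply Filter.Eventually.of_forall
        intro ω
        dsimp only
        rw [hYip ω, hYn ω]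
        ring
      have e2 : ∫ ω, (YInt Y (i:ℤ) ω - YInt Y (nn:ℤ) ω)^2 ∂μ
          = ∫ ω, (Y i ω - Y nn ω)^2 ∂μ := by
        apply integral_congr_ae
        apply Filter.Eventually.of_forall
        intro ω
        dsimp only
        rw [hYi ω, hYn ω]
      rw [e1, e2, ← integral_sub hBD.integrable_sq hB.integrable_sq]
      have e3 : ∀ ω, ((Y i ω - Y nn ω) - diffSeq Y i ω)^2 - (Y i ω - Y nn ω)^2
          = diffSeq Y i ω * diffSeq Y i ω
            - 2 * (diffSeq Y i ω * (Y i ω - Y nn ω)) := by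
        intro ω; ring
      simp_rw [e3]
      rw [integral_sub (hDDint i i) ((hmul (hDLp i) hB).const_mul 2), integral_const_mul]
      have e4 : ∀ ω, diffSeq Y i ω * (Y i ω - Y nn ω)
          = -∑ k ∈ Finset.Ico (i+1) T, diffSeq Y i ω * diffSeq Y k ω := by
        intro ω
        have h5 : ∑ k ∈ Finset.Ico (i+1) T, diffSeq Y k ω = Y nn ω - Y i ω := by
          rw [Finset.sum_Ico_eq_sub _ (by omega : i+1 ≤ T)]
          rw [hT, hsum nn ω, hsum i ω]
        rw [← Finset.mul_sum, h5]
        ring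
      simp_rw [e4]
      rw [integral_neg, integral_finset_sum _ (fun k _ => hDDint i k)]
      simp only [hc]
      ring
    -- reindexing the right-hand side
    have hreindex : ∑ i ∈ Finset.Icc (m + 1) (nn:ℤ),
        ((∫ ω, (YInt Y (i - 1) ω - YInt Y (nn:ℤ) ω) ^ 2 ∂μ) -
            ∫ ω, (YInt Y i ω - YInt Y (nn:ℤ) ω) ^ 2 ∂μ) / q i.toNat
        = ∑ i ∈ Finset.Ico M T,
        ((∫ ω, (YInt Y ((i:ℤ) - 1) ω - YInt Y (nn:ℤ) ω) ^ 2 ∂μ) -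
            ∫ ω, (YInt Y (i:ℤ) ω - YInt Y (nn:ℤ) ω) ^ 2 ∂μ) / q i := by
      refine Finset.sum_nbij' (fun i => i.toNat) (fun i => (i:ℤ)) ?_ ?_ ?_ ?_ ?_
      · intro a ha
        simp only [Finset.mem_Icc] at ha
        simp only [Finset.mem_Ico]
        omega
      · intro a ha
        simp only [Finset.mem_Ico] at ha
        simp only [Finset.mem_Icc]
        omega
      · intro a ha
        simp only [Finset.mem_Icc] at ha
        show ((a.toNat : ℤ)) = a
        omega
      · intro a _
        show ((a : ℤ)).toNat = a
        omega
      · intro a ha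
        simp only [Finset.mem_Icc] at ha
        have h1 : ((a.toNat : ℤ)) = a := Int.toNat_of_nonneg (by omega)
        rw [h1]
    rw [hsqint, hsym, hreindex]
    apply Finset.sum_congr rfl
    intro i hi
    rw [hAB i hi]
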